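/- For every real numbers φ with 1 < φ < 3/2, β > 2, and γ ≥ 0, the quantity G(β, γ, φ, n) := g(β, n)·M(γ, φ, n) + W(γ, φ, n) satisfies: G = Θ(n) for γ > 3−φ; G = Θ(n·log n) for γ = 3−φ; G = Θ(n^{4−γ−φ}) for 1 < γ < 3−φ; G = Θ(n^{3−φ}/log n) for γ = 1; and G = Θ(n^{3−φ}) for 0 ≤ γ < 1. -/

import Mathlib

/-- `f(n) = Θ(h(n))`: there exist constants `0 < c₁ ≤ c₂` and `N₀` such that
`c₁·h(n) ≤ f(n) ≤ c₂·h(n)` for all integers `n ≥ N₀`. -/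
def IsBigTheta (f h : ℕ → ℝ) : Prop :=
  ∃ c₁ c₂ : ℝ, 0 < c₁ ∧ c₁ ≤ c₂ ∧ ∃ N₀ : ℕ, ∀ n : ℕ, N₀ ≤ n →
    c₁ * h n ≤ f n ∧ f n ≤ c₂ * h n

/-- Zipf normalization `Z(γ, n) = Σ_{j=1}^{n−1} j^{−γ}`. -/
noncomputable def Z (γ : ℝ) (n : ℕ) : ℝ := ∑ j ∈ Finset.Icc 1 (n - 1), (j : ℝ) ^ (-γ)

/-- `Z_φ(l) = Σ_{m=1}^{l} m^{−φ}`. -/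
noncomputable def Zphi (φ : ℝ) (l : ℕ) : ℝ := ∑ m ∈ Finset.Icc 1 l, (m : ℝ) ^ (-φ)

/-- `D₁(φ, l) = Z_φ(l)⁻¹·Σ_{d=1}^{l} d^{1−φ}`. -/
noncomputable def D1 (φ : ℝ) (l : ℕ) : ℝ :=
  (Zphi φ l)⁻¹ * ∑ d ∈ Finset.Icc 1 l, (d : ℝ) ^ (1 - φ)

/-- `D_{1/2}(φ, l) = Z_φ(l)⁻¹·Σ_{d=1}^{l} d^{1/2−φ}`. -/
noncomputable def Dhalf (φ : ℝ) (l : ℕ) : ℝ :=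
  (Zphi φ l)⁻¹ * ∑ d ∈ Finset.Icc 1 l, (d : ℝ) ^ (1 / 2 - φ)

/-- `W(γ, φ, n) = n·Z(γ, n)⁻¹·Σ_{l=1}^{n−1} l^{−γ}·D₁(φ, l)`. -/
noncomputable def W (γ φ : ℝ) (n : ℕ) : ℝ :=
  n * (Z γ n)⁻¹ * ∑ l ∈ Finset.Icc 1 (n - 1), (l : ℝ) ^ (-γ) * D1 φ l

/-- `M(γ, φ, n) = n·Z(γ, n)⁻¹·Σ_{l=1}^{n−1} l^{−γ}·D_{1/2}(φ, l)`. -/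
noncomputable def M (γ φ : ℝ) (n : ℕ) : ℝ :=
  n * (Z γ n)⁻¹ * ∑ l ∈ Finset.Icc 1 (n - 1), (l : ℝ) ^ (-γ) * Dhalf φ l

/-- `g(β, n)`: `1` if `β > 2`; `log n` if `β = 2`; `n^{1−β/2}` if `1 < β < 2`;
`√(n/log n)` if `β = 1`; `√n` if `0 ≤ β < 1`. -/
noncomputable def g (β : ℝ) (n : ℕ) : ℝ :=
  if 2 < β then 1
  else if β = 2 then Real.log n
  else if 1 < β then (n : ℝ) ^ (1 - β / 2)
  else if β = 1 then Real.sqrt ((n : ℝ) / Real.log n)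
  else Real.sqrt n

/-- `G(β, γ, φ, n) = g(β, n)·M(γ, φ, n) + W(γ, φ, n)`, the deterministic core of the
transport-complexity lower bound for social-multicast. -/
noncomputable def G (β γ φ : ℝ) (n : ℕ) : ℝ := g β n * M γ φ n + W γ φ n


section Aux
open Real Finset

noncomputable def Sp (s : ℝ) (l : ℕ) : ℝ := ∑ m ∈ Finset.Icc 1 l, (m : ℝ) ^ s

lemma Sp_succ (s : ℝ) (l : ℕ) : Sp s (l + 1) = Sp s l + ((l + 1 : ℕ) : ℝ) ^ s := by
  rw [Sp, Sp, Finset.sum_Icc_succ_top (Nat.le_add_left 1 l)]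

lemma Sp_one (s : ℝ) : Sp s 1 = 1 := by simp [Sp]

lemma Sp_nonneg (s : ℝ) (l : ℕ) : 0 ≤ Sp s l :=
  Finset.sum_nonneg fun m _ => Real.rpow_nonneg (Nat.cast_nonneg m) s

lemma one_le_Sp (s : ℝ) {l : ℕ} (hl : 1 ≤ l) : 1 ≤ Sp s l := by
  have h1 : (1 : ℕ) ∈ Finset.Icc 1 l := by simp [hl]
  have := Finset.single_le_sum (f := fun m : ℕ => (m : ℝ) ^ s)
    (fun m _ => Real.rpow_nonneg (Nat.cast_nonneg m) s) h1
  simpa [Sp] using this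

lemma bernoulli_nonpos {u p : ℝ} (hu1 : -1 < u) (hu2 : u ≤ 0) (hp : p ≤ 0) :
    1 + p * u ≤ (1 + u) ^ p := by
  set q : ℝ := -p with hq
  have hq0 : 0 ≤ q := by simp [hq]; linarith
  have h1u : 0 < 1 + u := by linarith
  have hpq' : p = -q := by simp [hq]
  have hpq : (1 + u) ^ p = ((1 + u) ^ q)⁻¹ := by
    rw [hpq', Real.rpow_neg h1u.le]
  rcases le_or_gt 1 q with hq1 | hq1
  · have hv : (0:ℝ) ≤ -u / (1 + u) := div_nonneg (by linarith) h1u.le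
    have hB := one_add_mul_self_le_rpow_one_add (s := -u / (1 + u)) (by linarith) hq1
    have hinv : (1 + -u / (1 + u)) = (1 + u)⁻¹ := by field_simp; ring
    rw [hinv, Real.inv_rpow h1u.le q] at hB
    rw [hpq]
    refine le_trans ?_ hB
    have h3 : q * (-u) ≤ q * (-u / (1 + u)) := by
      rw [mul_div_assoc'] at *
      rw [le_div_iff₀ h1u]
      nlinarith [mul_nonneg (mul_nonneg hq0 (neg_nonneg.mpr hu2)) (neg_nonneg.mpr hu2)]
    nlinarith [h3]
  · have hB := rpow_one_add_le_one_add_mul_self (s := u) hu1.le hq0 hq1.le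
    have hqu : 0 < 1 + q * u := by nlinarith
    have hpos : 0 < (1 + u) ^ q := Real.rpow_pos_of_pos h1u q
    rw [hpq]
    have h2 : (1 + q * u)⁻¹ ≤ ((1 + u) ^ q)⁻¹ := inv_anti₀ hpos hB
    refine le_trans ?_ h2
    rw [← one_div, le_div_iff₀ hqu, hpq']
    nlinarith [sq_nonneg (q*u)]

section steps
variable {p x : ℝ}

lemma aux_inv_le_one (hx : 1 ≤ x) : (x + 1)⁻¹ ≤ 1 := by
  have h1 : (0:ℝ) < x + 1 := by linarith
  have h2 : (x+1) * (x+1)⁻¹ = 1 := mul_inv_cancel₀ h1.ne'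
  nlinarith [inv_pos.mpr h1]

lemma aux_eq1 (hx : 1 ≤ x) : (1 + -(x+1)⁻¹) = x / (x+1) := by
  have h1 : x + 1 ≠ 0 := by positivity
  field_simp
  ring

lemma aux_eq2 (hx : 1 ≤ x) : (x+1)⁻¹ * (x+1) ^ p = (x+1) ^ (p-1) := by
  have h1 : (0:ℝ) < x + 1 := by linarith
  rw [Real.rpow_sub h1, Real.rpow_one, div_eq_inv_mul]

lemma step_concave (hp0 : 0 ≤ p) (hp1 : p ≤ 1) (hx : 1 ≤ x) :
    p * (x + 1) ^ (p - 1) ≤ (x + 1) ^ p - x ^ p := by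
  have hx1 : (0:ℝ) < x + 1 := by linarith
  have hB := rpow_one_add_le_one_add_mul_self (s := -(x+1)⁻¹)
    (by have := aux_inv_le_one hx; linarith) hp0 hp1
  rw [aux_eq1 hx, Real.div_rpow (by linarith) hx1.le] at hB
  have hpos : (0:ℝ) < (x+1)^p := Real.rpow_pos_of_pos hx1 p
  rw [div_le_iff₀ hpos] at hB
  have h3 : (1 + p * -(x+1)⁻¹) * (x+1)^p = (x+1)^p - p * ((x+1)⁻¹*(x+1)^p) := by ring
  rw [h3, aux_eq2 hx] at hB
  linarith

lemma step_convex (hp : 1 ≤ p) (hx : 1 ≤ x) :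
    (x + 1) ^ p - x ^ p ≤ p * (x + 1) ^ (p - 1) := by
  have hx1 : (0:ℝ) < x + 1 := by linarith
  have hB := one_add_mul_self_le_rpow_one_add (s := -(x+1)⁻¹)
    (by have := aux_inv_le_one hx; linarith) hp
  rw [aux_eq1 hx, Real.div_rpow (by linarith) hx1.le] at hB
  have hpos : (0:ℝ) < (x+1)^p := Real.rpow_pos_of_pos hx1 p
  rw [le_div_iff₀ hpos] at hB
  have h3 : (1 + p * -(x+1)⁻¹) * (x+1)^p = (x+1)^p - p * ((x+1)⁻¹*(x+1)^p) := by ring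
  rw [h3, aux_eq2 hx] at hB
  linarith

lemma step_convex_neg (hp : p ≤ 0) (hx : 1 ≤ x) :
    (x + 1) ^ p - x ^ p ≤ p * (x + 1) ^ (p - 1) := by
  have hx1 : (0:ℝ) < x + 1 := by linarith
  have hi : (0:ℝ) < (x+1)⁻¹ := by positivity
  have h2 : (x+1) * (x+1)⁻¹ = 1 := mul_inv_cancel₀ hx1.ne'
  have hB := bernoulli_nonpos (u := -(x+1)⁻¹)
    (by nlinarith) (by linarith) hp
  rw [aux_eq1 hx, Real.div_rpow (by linarith) hx1.le] at hB
  have hpos : (0:ℝ) < (x+1)^p := Real.rpow_pos_of_pos hx1 p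
  rw [le_div_iff₀ hpos] at hB
  have h3 : (1 + p * -(x+1)⁻¹) * (x+1)^p = (x+1)^p - p * ((x+1)⁻¹*(x+1)^p) := by ring
  rw [h3, aux_eq2 hx] at hB
  linarith

end steps

lemma one_le_rpow_aux {l : ℕ} (hl : 1 ≤ l) {t : ℝ} (ht : 0 ≤ t) : 1 ≤ (l:ℝ) ^ t := by
  have h1 : (1:ℝ) ≤ (l:ℝ) := by exact_mod_cast hl
  calc (1:ℝ) = 1 ^ t := (Real.one_rpow t).symm
  _ ≤ (l:ℝ) ^ t := Real.rpow_le_rpow (by norm_num) h1 ht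

lemma Sp_theta {s : ℝ} (hs : -1 < s) :
    ∃ a b : ℝ, 0 < a ∧ a ≤ b ∧ ∀ l : ℕ, 1 ≤ l →
      a * (l:ℝ) ^ (s+1) ≤ Sp s l ∧ Sp s l ≤ b * (l:ℝ) ^ (s+1) := by
  have hs1 : (0:ℝ) < s + 1 := by linarith
  rcases le_or_gt s 0 with hsn | hsp
  · refine ⟨1, (s+2)/(s+1), one_pos, ?_, ?_⟩
    · rw [le_div_iff₀ hs1]; linarith
    intro l hl
    have hl1 : (1:ℝ) ≤ (l:ℝ) := by exact_mod_cast hl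
    have hl0 : (l:ℝ) ≠ 0 := by linarith
    have hLpos : (0:ℝ) < (l:ℝ) ^ (s+1) := Real.rpow_pos_of_pos (by linarith) _
    constructor
    · -- lower: each term ≥ l^s
      have hterm : ∀ m ∈ Finset.Icc 1 l, (l:ℝ) ^ s ≤ (m:ℝ) ^ s := by
        intro m hm
        simp only [Finset.mem_Icc] at hm
        exact Real.rpow_le_rpow_of_nonpos (by exact_mod_cast hm.1) (by exact_mod_cast hm.2) hsn
      have hsum := Finset.card_nsmul_le_sum (Finset.Icc 1 l) (fun m : ℕ => (m:ℝ)^s) _ hterm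
      rw [Nat.card_Icc] at hsum
      simp only [nsmul_eq_mul] at hsum
      have : (l:ℝ) ^ (s+1) = (l:ℝ)^s * l := Real.rpow_add_one hl0 s
      rw [one_mul, this]
      calc (l:ℝ)^s * l = ((l + 1 - 1 : ℕ):ℝ) * (l:ℝ)^s := by push_cast [hl]; ring
      _ ≤ Sp s l := hsum
    · -- upper via induction
      have key : ∀ l : ℕ, 1 ≤ l → (s+1) * Sp s l ≤ s + (l:ℝ)^(s+1) := by
        intro l hl
        induction l, hl using Nat.le_induction with
        | base => simp [Sp_one]
        | succ l hl ih =>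
          have hlr : (1:ℝ) ≤ (l:ℝ) := by exact_mod_cast hl
          have hstep := step_concave (p := s+1) (by linarith) (by linarith) hlr
          have he : s + 1 - 1 = s := by ring
          rw [he] at hstep
          rw [Sp_succ]
          push_cast
          ring_nf
          ring_nf at ih hstep ⊢
          nlinarith [ih, hstep]
      have h := key l hl
      rw [div_mul_eq_mul_div, le_div_iff₀ hs1]
      have hL1 : (1:ℝ) ≤ (l:ℝ)^(s+1) := one_le_rpow_aux hl (by linarith)
      nlinarith [h]
  · refine ⟨1/(s+1), 1, by positivity, by rw [div_le_one hs1]; linarith, ?_⟩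
    intro l hl
    have hl1 : (1:ℝ) ≤ (l:ℝ) := by exact_mod_cast hl
    have hl0 : (l:ℝ) ≠ 0 := by linarith
    constructor
    · have key : ∀ l : ℕ, 1 ≤ l → s + (l:ℝ)^(s+1) ≤ (s+1) * Sp s l := by
        intro l hl
        induction l, hl using Nat.le_induction with
        | base => simp [Sp_one]
        | succ l hl ih =>
          have hlr : (1:ℝ) ≤ (l:ℝ) := by exact_mod_cast hl
          have hstep := step_convex (p := s+1) (by linarith) hlr
          have he : s + 1 - 1 = s := by ring
          rw [he] at hstep
          rw [Sp_succ]
          push_cast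
          ring_nf
          ring_nf at ih hstep ⊢
          nlinarith [ih, hstep]
      have h := key l hl
      rw [div_mul_eq_mul_div, one_mul, div_le_iff₀ hs1]
      nlinarith [h, Sp_nonneg s l]
    · have hterm : ∀ m ∈ Finset.Icc 1 l, (m:ℝ) ^ s ≤ (l:ℝ) ^ s := by
        intro m hm
        simp only [Finset.mem_Icc] at hm
        exact Real.rpow_le_rpow (by positivity) (by exact_mod_cast hm.2) hsp.le
      have hsum := Finset.sum_le_card_nsmul (Finset.Icc 1 l) (fun m : ℕ => (m:ℝ)^s) _ hterm
      rw [Nat.card_Icc] at hsum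
      simp only [nsmul_eq_mul] at hsum
      have hre : (l:ℝ) ^ (s+1) = (l:ℝ)^s * l := Real.rpow_add_one hl0 s
      rw [one_mul, hre]
      calc Sp s l ≤ ((l + 1 - 1 : ℕ):ℝ) * (l:ℝ)^s := hsum
      _ = (l:ℝ)^s * l := by push_cast [hl]; ring

lemma Sp_bounded {s : ℝ} (hs : s < -1) :
    ∃ b : ℝ, 1 ≤ b ∧ ∀ l : ℕ, 1 ≤ l → 1 ≤ Sp s l ∧ Sp s l ≤ b := by
  set q : ℝ := -(s+1) with hq
  have hq0 : 0 < q := by simp [hq]; linarith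
  refine ⟨(q+1)/q, by rw [le_div_iff₀ hq0]; linarith, ?_⟩
  intro l hl
  refine ⟨one_le_Sp s hl, ?_⟩
  have key : ∀ l : ℕ, 1 ≤ l → q * Sp s l ≤ q + 1 - (l:ℝ)^(s+1) := by
    intro l hl
    induction l, hl using Nat.le_induction with
    | base => simp [Sp_one]
    | succ l hl ih =>
      have hlr : (1:ℝ) ≤ (l:ℝ) := by exact_mod_cast hl
      have hstep := step_convex_neg (p := s+1) (by linarith) hlr
      have he : s + 1 - 1 = s := by ring
      rw [he] at hstep
      rw [Sp_succ]
      push_cast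
      ring_nf
      ring_nf at ih hstep ⊢
      nlinarith [ih, hstep]
  have h := key l hl
  have hL : (0:ℝ) ≤ (l:ℝ)^(s+1) := Real.rpow_nonneg (by positivity) _
  rw [le_div_iff₀ hq0]
  nlinarith [h]

lemma Sp_log : ∀ l : ℕ, 1 ≤ l →
    Real.log ((l:ℝ) + 1) ≤ Sp (-1) l ∧ Sp (-1) l ≤ 1 + Real.log l := by
  intro l hl
  induction l, hl using Nat.le_induction with
  | base =>
    constructor
    · have := Real.log_le_sub_one_of_pos (x := (2:ℝ)) (by norm_num)
      rw [Sp_one]; push_cast; norm_num; linarith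
    · rw [Sp_one]; push_cast; rw [Real.log_one]; norm_num
  | succ l hl ih =>
    have hlr : (1:ℝ) ≤ (l:ℝ) := by exact_mod_cast hl
    have h1 : (0:ℝ) < (l:ℝ) + 1 := by linarith
    have h2 : (0:ℝ) < (l:ℝ) + 2 := by linarith
    have hterm : ((l+1:ℕ):ℝ) ^ (-1:ℝ) = ((l:ℝ)+1)⁻¹ := by
      push_cast
      rw [Real.rpow_neg_one]
    rw [Sp_succ, hterm]
    constructor
    · -- log(l+2) ≤ Sp + (l+1)⁻¹, with log(l+1) ≤ Sp
      have hd := Real.log_le_sub_one_of_pos (x := ((l:ℝ)+2)/((l:ℝ)+1)) (by positivity)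
      rw [Real.log_div h2.ne' h1.ne'] at hd
      have he : ((l:ℝ)+2)/((l:ℝ)+1) - 1 = ((l:ℝ)+1)⁻¹ := by
        field_simp
        norm_num
      rw [he] at hd
      push_cast
      have h3 : (l:ℝ)+1+1 = (l:ℝ)+2 := by ring
      rw [h3]
      have := ih.1
      linarith
    · -- Sp + (l+1)⁻¹ ≤ 1 + log(l+1), with Sp ≤ 1 + log l
      have hd := Real.log_le_sub_one_of_pos (x := ((l:ℝ))/((l:ℝ)+1)) (by positivity)
      rw [Real.log_div (by linarith) h1.ne'] at hd
      have he : ((l:ℝ))/((l:ℝ)+1) - 1 = -((l:ℝ)+1)⁻¹ := by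
        rw [div_sub' h1.ne']
        rw [show (l:ℝ) - ((l:ℝ)+1)*1 = -1 by ring, neg_div, ← one_div]
      rw [he] at hd
      push_cast
      have := ih.2
      linarith


lemma Zphi_eq (φ : ℝ) (l : ℕ) : Zphi φ l = Sp (-φ) l := rfl

lemma Z_eq (γ : ℝ) (n : ℕ) : Z γ n = Sp (-γ) (n - 1) := rfl

lemma D1_eq (φ : ℝ) (l : ℕ) : D1 φ l = (Zphi φ l)⁻¹ * Sp (1 - φ) l := rfl

lemma Dhalf_eq (φ : ℝ) (l : ℕ) : Dhalf φ l = (Zphi φ l)⁻¹ * Sp (1/2 - φ) l := rfl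

lemma D1_bounds {φ : ℝ} (hφ1 : 1 < φ) (hφ2 : φ < 3/2) :
    ∃ a b : ℝ, 0 < a ∧ a ≤ b ∧ ∀ l : ℕ, 1 ≤ l →
      a * (l:ℝ) ^ (2 - φ) ≤ D1 φ l ∧ D1 φ l ≤ b * (l:ℝ) ^ (2 - φ) := by
  obtain ⟨K, hK1, hZb⟩ := Sp_bounded (s := -φ) (by linarith)
  obtain ⟨a2, b2, ha2, hab2, hA⟩ := Sp_theta (s := 1 - φ) (by linarith)
  have hK0 : (0:ℝ) < K := by linarith
  refine ⟨K⁻¹ * a2, 1 * b2, by positivity, ?_, ?_⟩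
  · apply mul_le_mul _ hab2 ha2.le zero_le_one
    rw [inv_le_one_iff₀]; right; exact hK1
  intro l hl
  obtain ⟨hZ1, hZ2⟩ := hZb l hl
  obtain ⟨hA1, hA2⟩ := hA l hl
  have he : (1 - φ + 1) = 2 - φ := by ring
  rw [he] at hA1 hA2
  have hZpos : (0:ℝ) < Sp (-φ) l := by linarith
  have hinv1 : K⁻¹ ≤ (Sp (-φ) l)⁻¹ := inv_anti₀ hZpos hZ2
  have hinv2 : (Sp (-φ) l)⁻¹ ≤ 1 := by
    rw [inv_le_one_iff₀]; right; exact hZ1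
  have hLpos : (0:ℝ) ≤ (l:ℝ) ^ (2 - φ) := Real.rpow_nonneg (by positivity) _
  rw [D1_eq, Zphi_eq]
  constructor
  · have := mul_le_mul hinv1 hA1 (by positivity) (by positivity)
    calc K⁻¹ * a2 * (l:ℝ)^(2-φ) = K⁻¹ * (a2 * (l:ℝ)^(2-φ)) := by ring
    _ ≤ (Sp (-φ) l)⁻¹ * Sp (1-φ) l := this
  · have := mul_le_mul hinv2 hA2 (Sp_nonneg _ _) zero_le_one
    calc (Sp (-φ) l)⁻¹ * Sp (1-φ) l ≤ 1 * (b2 * (l:ℝ)^(2-φ)) := this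
    _ = 1 * b2 * (l:ℝ)^(2-φ) := by ring

noncomputable def Tw (γ φ : ℝ) (n : ℕ) : ℝ :=
  ∑ l ∈ Finset.Icc 1 (n - 1), (l : ℝ) ^ (-γ) * D1 φ l

noncomputable def Tm (γ φ : ℝ) (n : ℕ) : ℝ :=
  ∑ l ∈ Finset.Icc 1 (n - 1), (l : ℝ) ^ (-γ) * Dhalf φ l

lemma W_eq (γ φ : ℝ) (n : ℕ) : W γ φ n = n * (Z γ n)⁻¹ * Tw γ φ n := rfl

lemma M_eq (γ φ : ℝ) (n : ℕ) : M γ φ n = n * (Z γ n)⁻¹ * Tm γ φ n := rfl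

lemma Tw_bounds {φ : ℝ} (hφ1 : 1 < φ) (hφ2 : φ < 3/2) (γ : ℝ) :
    ∃ a b : ℝ, 0 < a ∧ a ≤ b ∧ ∀ n : ℕ,
      a * Sp (2 - φ - γ) (n - 1) ≤ Tw γ φ n ∧ Tw γ φ n ≤ b * Sp (2 - φ - γ) (n - 1) := by
  obtain ⟨a, b, ha, hab, hD⟩ := D1_bounds hφ1 hφ2
  refine ⟨a, b, ha, hab, fun n => ?_⟩
  have hterm : ∀ l ∈ Finset.Icc 1 (n-1),
      a * (l:ℝ) ^ (2 - φ - γ) ≤ (l:ℝ) ^ (-γ) * D1 φ l ∧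
      (l:ℝ) ^ (-γ) * D1 φ l ≤ b * (l:ℝ) ^ (2 - φ - γ) := by
    intro l hlm
    simp only [Finset.mem_Icc] at hlm
    have hl := hlm.1
    have hlpos : (0:ℝ) < l := by exact_mod_cast hl
    obtain ⟨h1, h2⟩ := hD l hl
    have hg : (0:ℝ) ≤ (l:ℝ) ^ (-γ) := Real.rpow_nonneg hlpos.le _
    have hmul : (l:ℝ) ^ (-γ) * (l:ℝ) ^ (2 - φ) = (l:ℝ) ^ (2 - φ - γ) := by
      rw [← Real.rpow_add hlpos]; ring_nf
    constructor
    · calc a * (l:ℝ)^(2-φ-γ) = (l:ℝ)^(-γ) * (a * (l:ℝ)^(2-φ)) := by rw [← hmul]; ring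
      _ ≤ (l:ℝ)^(-γ) * D1 φ l := by
          exact mul_le_mul_of_nonneg_left h1 hg
    · calc (l:ℝ)^(-γ) * D1 φ l ≤ (l:ℝ)^(-γ) * (b * (l:ℝ)^(2-φ)) :=
          mul_le_mul_of_nonneg_left h2 hg
      _ = b * (l:ℝ)^(2-φ-γ) := by rw [← hmul]; ring
  constructor
  · rw [show a * Sp (2-φ-γ) (n-1) = ∑ l ∈ Finset.Icc 1 (n-1), a * (l:ℝ)^(2-φ-γ) by
      rw [Sp, Finset.mul_sum]]
    exact Finset.sum_le_sum fun l hlm => (hterm l hlm).1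
  · rw [show b * Sp (2-φ-γ) (n-1) = ∑ l ∈ Finset.Icc 1 (n-1), b * (l:ℝ)^(2-φ-γ) by
      rw [Sp, Finset.mul_sum]]
    exact Finset.sum_le_sum fun l hlm => (hterm l hlm).2

lemma Tm_nonneg_le {φ : ℝ} (hφ1 : 1 < φ) (γ : ℝ) (n : ℕ) :
    0 ≤ Tm γ φ n ∧ Tm γ φ n ≤ Tw γ φ n := by
  have hterm : ∀ l ∈ Finset.Icc 1 (n-1),
      0 ≤ (l:ℝ) ^ (-γ) * Dhalf φ l ∧ (l:ℝ) ^ (-γ) * Dhalf φ l ≤ (l:ℝ) ^ (-γ) * D1 φ l := by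
    intro l hlm
    simp only [Finset.mem_Icc] at hlm
    have hg : (0:ℝ) ≤ (l:ℝ) ^ (-γ) := Real.rpow_nonneg (by positivity) _
    have hZn : (0:ℝ) ≤ (Zphi φ l)⁻¹ := by
      rw [Zphi_eq]; exact inv_nonneg.mpr (Sp_nonneg _ _)
    have hcmp : Sp (1/2 - φ) l ≤ Sp (1 - φ) l := by
      apply Finset.sum_le_sum
      intro d hd
      simp only [Finset.mem_Icc] at hd
      have : (1:ℝ) ≤ (d:ℝ) := by exact_mod_cast hd.1
      exact Real.rpow_le_rpow_of_exponent_le this (by linarith)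
    constructor
    · apply mul_nonneg hg
      rw [Dhalf_eq]
      exact mul_nonneg hZn (Sp_nonneg _ _)
    · apply mul_le_mul_of_nonneg_left _ hg
      rw [Dhalf_eq, D1_eq]
      exact mul_le_mul_of_nonneg_left hcmp hZn
  constructor
  · exact Finset.sum_nonneg fun l hlm => (hterm l hlm).1
  · exact Finset.sum_le_sum fun l hlm => (hterm l hlm).2

lemma theta_congr {f h h' : ℕ → ℝ} (N : ℕ) (he : ∀ n, N ≤ n → h n = h' n) :
    IsBigTheta f h → IsBigTheta f h' := by
  rintro ⟨c₁, c₂, h₁, h₁₂, N₀, hb⟩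
  refine ⟨c₁, c₂, h₁, h₁₂, max N N₀, fun n hn => ?_⟩
  rw [← he n (le_trans (le_max_left _ _) hn)]
  exact hb n (le_trans (le_max_right _ _) hn)

lemma G_theta {γ β φ : ℝ} (hβ : 2 < β) (hφ1 : 1 < φ) (hφ2 : φ < 3/2)
    {hz ht : ℕ → ℝ} {za zb ta tb : ℝ} (hza : 0 < za) (hta : 0 < ta) {N₀ : ℕ} (hN : 2 ≤ N₀)
    (hzpos : ∀ n, N₀ ≤ n → 0 < hz n) (htpos : ∀ n, N₀ ≤ n → 0 < ht n)
    (hZ : ∀ n, N₀ ≤ n → za * hz n ≤ Z γ n ∧ Z γ n ≤ zb * hz n)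
    (hT : ∀ n, N₀ ≤ n → ta * ht n ≤ Sp (2 - φ - γ) (n - 1) ∧
      Sp (2 - φ - γ) (n - 1) ≤ tb * ht n) :
    IsBigTheta (fun n => G β γ φ n) (fun n => (n:ℝ) * ht n * (hz n)⁻¹) := by
  have hzb : 0 < zb := by
    have h := hZ N₀ le_rfl
    have := hzpos N₀ le_rfl
    nlinarith [h.1.trans h.2]
  have htb : 0 < tb := by
    have h := hT N₀ le_rfl
    have := htpos N₀ le_rfl
    nlinarith [h.1.trans h.2]
  obtain ⟨a, b, ha, hab, hTw⟩ := Tw_bounds hφ1 hφ2 γ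
  have hb : 0 < b := ha.trans_le hab
  set c₁ : ℝ := zb⁻¹ * (a * ta) with hc₁
  set c₂ : ℝ := 2 * (za⁻¹ * (b * tb)) with hc₂
  have hc₁0 : 0 < c₁ := by positivity
  have hc₂0 : 0 < c₂ := by positivity
  refine ⟨c₁, max c₁ c₂, hc₁0, le_max_left _ _, N₀, fun n hn => ?_⟩
  have hnr : (2:ℝ) ≤ (n:ℕ) := by exact_mod_cast hN.trans hn
  have hzn := hzpos n hn
  have htn := htpos n hn
  obtain ⟨hZ1, hZ2⟩ := hZ n hn
  obtain ⟨hT1, hT2⟩ := hT n hn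
  obtain ⟨hTw1, hTw2⟩ := hTw n
  have hZpos : 0 < Z γ n := by nlinarith
  have hTwlow : a * ta * ht n ≤ Tw γ φ n := by
    calc a * ta * ht n = a * (ta * ht n) := by ring
    _ ≤ a * Sp (2-φ-γ) (n-1) := by exact mul_le_mul_of_nonneg_left hT1 ha.le
    _ ≤ Tw γ φ n := hTw1
  have hTwup : Tw γ φ n ≤ b * tb * ht n := by
    calc Tw γ φ n ≤ b * Sp (2-φ-γ) (n-1) := hTw2
    _ ≤ b * (tb * ht n) := mul_le_mul_of_nonneg_left hT2 (ha.trans_le hab).le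
    _ = b * tb * ht n := by ring
  have hTwpos : 0 ≤ Tw γ φ n := le_trans (by positivity) hTwlow
  have hZi1 : (zb * hz n)⁻¹ ≤ (Z γ n)⁻¹ := inv_anti₀ hZpos hZ2
  have hZi2 : (Z γ n)⁻¹ ≤ (za * hz n)⁻¹ := inv_anti₀ (by positivity) hZ1
  have hWlow : c₁ * ((n:ℝ) * ht n * (hz n)⁻¹) ≤ W γ φ n := by
    rw [W_eq]
    have : c₁ * ((n:ℝ) * ht n * (hz n)⁻¹) = (n:ℝ) * (zb * hz n)⁻¹ * (a * ta * ht n) := by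
      rw [hc₁, mul_inv]; ring
    rw [this]
    apply mul_le_mul _ hTwlow (by positivity) (by positivity)
    exact mul_le_mul_of_nonneg_left hZi1 (by positivity)
  have hWup : W γ φ n ≤ za⁻¹ * (b * tb) * ((n:ℝ) * ht n * (hz n)⁻¹) := by
    rw [W_eq]
    have heq : za⁻¹ * (b * tb) * ((n:ℝ) * ht n * (hz n)⁻¹) =
        (n:ℝ) * (za * hz n)⁻¹ * (b * tb * ht n) := by
      rw [mul_inv]; ring
    rw [heq]
    apply mul_le_mul _ hTwup hTwpos (by positivity)
    exact mul_le_mul_of_nonneg_left hZi2 (by positivity)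
  have hg : g β n = 1 := if_pos hβ
  obtain ⟨hM0, hMW⟩ := Tm_nonneg_le hφ1 γ n
  have hMW' : 0 ≤ M γ φ n ∧ M γ φ n ≤ W γ φ n := by
    rw [M_eq, W_eq]
    have hf : (0:ℝ) ≤ (n:ℝ) * (Z γ n)⁻¹ := by positivity
    exact ⟨mul_nonneg hf hM0, mul_le_mul_of_nonneg_left hMW hf⟩
  have hGW : W γ φ n ≤ G β γ φ n ∧ G β γ φ n ≤ 2 * W γ φ n := by
    rw [G, hg, one_mul]
    constructor <;> linarith [hMW'.1, hMW'.2]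
  constructor
  · exact le_trans hWlow hGW.1
  · calc G β γ φ n ≤ 2 * W γ φ n := hGW.2
    _ ≤ 2 * (za⁻¹ * (b * tb) * ((n:ℝ) * ht n * (hz n)⁻¹)) := by
        apply mul_le_mul_of_nonneg_left hWup (by norm_num)
    _ = c₂ * ((n:ℝ) * ht n * (hz n)⁻¹) := by rw [hc₂]; ring
    _ ≤ max c₁ c₂ * ((n:ℝ) * ht n * (hz n)⁻¹) := by
        apply mul_le_mul_of_nonneg_right (le_max_right _ _) (by positivity)

lemma rpow_pred_bounds {t : ℝ} (ht0 : 0 ≤ t) (ht2 : t ≤ 2) {n : ℕ} (hn : 2 ≤ n) :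
    (1/4) * (n:ℝ) ^ t ≤ ((n-1:ℕ):ℝ) ^ t ∧ ((n-1:ℕ):ℝ) ^ t ≤ (n:ℝ) ^ t := by
  have h1n : 1 ≤ n := by omega
  have hc : ((n-1:ℕ):ℝ) = (n:ℝ) - 1 := by push_cast [h1n]; ring
  have hnr : (2:ℝ) ≤ (n:ℝ) := by exact_mod_cast hn
  have hnp : (0:ℝ) < (n:ℝ) := by linarith
  constructor
  · have h4 : (2:ℝ) ^ t ≤ 4 := by
      calc (2:ℝ) ^ t ≤ (2:ℝ) ^ (2:ℝ) :=
        Real.rpow_le_rpow_of_exponent_le one_le_two ht2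
      _ = (2:ℝ) ^ (1+1:ℝ) := by norm_num
      _ = 4 := by rw [Real.rpow_add (by norm_num), Real.rpow_one]; norm_num
    have h2p : (0:ℝ) < (2:ℝ) ^ t := Real.rpow_pos_of_pos (by norm_num) t
    have hhalf : (n:ℝ)/2 ≤ (n:ℝ) - 1 := by linarith
    calc (1/4) * (n:ℝ)^t ≤ ((2:ℝ)^t)⁻¹ * (n:ℝ)^t := by
          apply mul_le_mul_of_nonneg_right _ (Real.rpow_nonneg hnp.le t)
          rw [show (1/4 : ℝ) = 4⁻¹ by norm_num]
          exact inv_anti₀ h2p h4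
    _ = ((n:ℝ)/2) ^ t := by rw [Real.div_rpow hnp.le (by norm_num)]; ring
    _ ≤ ((n:ℝ) - 1) ^ t := Real.rpow_le_rpow (by positivity) hhalf ht0
    _ = ((n-1:ℕ):ℝ) ^ t := by rw [hc]
  · rw [hc]
    exact Real.rpow_le_rpow (by linarith) (by linarith) ht0

lemma Sp_neg_one_log {n : ℕ} (hn : 4 ≤ n) :
    1 * Real.log n ≤ Sp (-1) (n-1) ∧ Sp (-1) (n-1) ≤ 2 * Real.log n := by
  have hl : 1 ≤ n - 1 := by omega
  obtain ⟨h1, h2⟩ := Sp_log (n-1) hl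
  have h1n : 1 ≤ n := by omega
  have hc : ((n-1:ℕ):ℝ) = (n:ℝ) - 1 := by push_cast [h1n]; ring
  have hnr : (4:ℝ) ≤ (n:ℝ) := by exact_mod_cast hn
  have hlog1 : 1 ≤ Real.log n := by
    rw [Real.le_log_iff_exp_le (by linarith)]
    have := Real.exp_one_lt_d9
    linarith
  constructor
  · rw [hc, show (n:ℝ) - 1 + 1 = (n:ℝ) by ring] at h1
    linarith
  · have hmono : Real.log ((n:ℝ) - 1) ≤ Real.log n :=
      Real.log_le_log (by linarith) (by linarith)
    rw [hc] at h2
    linarith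


end Aux

open Real Finset

theorem social_multicast_order_phi_mid_beta_gt_two (γ β φ : ℝ) (hγ : 0 ≤ γ)
    (hφ₁ : 1 < φ) (hφ₂ : φ < 3 / 2) (hβ : 2 < β) :
    (3 - φ < γ → IsBigTheta (fun n => G β γ φ n) (fun n => (n : ℝ))) ∧
    (γ = 3 - φ → IsBigTheta (fun n => G β γ φ n) (fun n => (n : ℝ) * Real.log n)) ∧
    (1 < γ ∧ γ < 3 - φ →
      IsBigTheta (fun n => G β γ φ n) (fun n => (n : ℝ) ^ (4 - γ - φ))) ∧
    (γ = 1 → IsBigTheta (fun n => G β γ φ n) (fun n => (n : ℝ) ^ (3 - φ) / Real.log n)) ∧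
    (γ < 1 → IsBigTheta (fun n => G β γ φ n) (fun n => (n : ℝ) ^ (3 - φ))) := by
  refine ⟨?_, ?_, ?_, ?_, ?_⟩
  · -- γ > 3 - φ : Θ(n)
    intro h3φ
    obtain ⟨bz, hbz1, hbz⟩ := Sp_bounded (s := -γ) (by linarith)
    obtain ⟨bt, hbt1, hbt⟩ := Sp_bounded (s := 2-φ-γ) (by linarith)
    have hth := G_theta (γ := γ) hβ hφ₁ hφ₂ (hz := fun _ => 1) (ht := fun _ => 1)
      (za := 1) (zb := bz) (ta := 1) (tb := bt) one_pos one_pos (N₀ := 2) le_rfl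
      (fun n _ => one_pos) (fun n _ => one_pos)
      (fun n hn => by
        rw [Z_eq]
        have := hbz (n-1) (by omega)
        simpa using this)
      (fun n hn => by
        have := hbt (n-1) (by omega)
        simpa using this)
    exact theta_congr 0 (fun n _ => by simp) hth
  · -- γ = 3 - φ : Θ(n log n)
    intro hγeq
    subst hγeq
    obtain ⟨bz, hbz1, hbz⟩ := Sp_bounded (s := -(3-φ)) (by linarith)
    have hth := G_theta (γ := 3-φ) hβ hφ₁ hφ₂ (hz := fun _ => 1)
      (ht := fun n => Real.log n)
      (za := 1) (zb := bz) (ta := 1) (tb := 2) one_pos one_pos (N₀ := 4) (by norm_num)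
      (fun n _ => one_pos)
      (fun n hn => Real.log_pos (by exact_mod_cast (by omega : 1 < n)))
      (fun n hn => by
        rw [Z_eq]
        have := hbz (n-1) (by omega)
        simpa using this)
      (fun n hn => by
        rw [show 2 - φ - (3-φ) = -1 by ring]
        exact Sp_neg_one_log hn)
    exact theta_congr 0 (fun n _ => by simp) hth
  · -- 1 < γ < 3 - φ : Θ(n^{4-γ-φ})
    rintro ⟨hγ1, hγ2⟩
    obtain ⟨bz, hbz1, hbz⟩ := Sp_bounded (s := -γ) (by linarith)
    obtain ⟨at_, bt, hat, hatb, hSp⟩ := Sp_theta (s := 2-φ-γ) (by linarith)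
    have hth := G_theta (γ := γ) hβ hφ₁ hφ₂ (hz := fun _ => 1)
      (ht := fun n => (n:ℝ) ^ (3-φ-γ))
      (za := 1) (zb := bz) (ta := at_/4) (tb := bt) one_pos (by positivity) (N₀ := 2) le_rfl
      (fun n _ => one_pos)
      (fun n hn => Real.rpow_pos_of_pos (by exact_mod_cast (by omega : 0 < n)) _)
      (fun n hn => by
        rw [Z_eq]
        have := hbz (n-1) (by omega)
        simpa using this)
      (fun n hn => by
        have h := hSp (n-1) (by omega)
        rw [show 2-φ-γ+1 = 3-φ-γ by ring] at h
        obtain ⟨hp1, hp2⟩ := rpow_pred_bounds (t := 3-φ-γ) (by linarith) (by linarith) hn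
        constructor
        · calc at_/4 * (n:ℝ)^(3-φ-γ) = at_ * ((1/4) * (n:ℝ)^(3-φ-γ)) := by ring
          _ ≤ at_ * ((n-1:ℕ):ℝ)^(3-φ-γ) := mul_le_mul_of_nonneg_left hp1 hat.le
          _ ≤ Sp (2-φ-γ) (n-1) := h.1
        · calc Sp (2-φ-γ) (n-1) ≤ bt * ((n-1:ℕ):ℝ)^(3-φ-γ) := h.2
          _ ≤ bt * (n:ℝ)^(3-φ-γ) :=
            mul_le_mul_of_nonneg_left hp2 (hat.trans_le hatb).le)
    refine theta_congr 1 (fun n hn => ?_) hth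
    have hnp : (0:ℝ) < (n:ℝ) := by exact_mod_cast hn
    rw [show (4:ℝ)-γ-φ = (3-φ-γ)+1 by ring, Real.rpow_add_one hnp.ne']
    simp [mul_comm]
  · -- γ = 1 : Θ(n^{3-φ}/log n)
    intro hγeq
    subst hγeq
    obtain ⟨at_, bt, hat, hatb, hSp⟩ := Sp_theta (s := 1-φ) (by linarith)
    have hth := G_theta (γ := 1) hβ hφ₁ hφ₂ (hz := fun n => Real.log n)
      (ht := fun n => (n:ℝ) ^ (2-φ))
      (za := 1) (zb := 2) (ta := at_/4) (tb := bt) one_pos (by positivity) (N₀ := 4)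
      (by norm_num)
      (fun n hn => Real.log_pos (by exact_mod_cast (by omega : 1 < n)))
      (fun n hn => Real.rpow_pos_of_pos (by exact_mod_cast (by omega : 0 < n)) _)
      (fun n hn => by
        rw [Z_eq, show -(1:ℝ) = (-1 : ℝ) by ring]
        exact Sp_neg_one_log hn)
      (fun n hn => by
        have h := hSp (n-1) (by omega)
        rw [show 1-φ+1 = 2-φ by ring] at h
        rw [show 2-φ-1 = 1-φ by ring]
        obtain ⟨hp1, hp2⟩ := rpow_pred_bounds (t := 2-φ) (by linarith) (by linarith)
          (by omega : 2 ≤ n)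
        constructor
        · calc at_/4 * (n:ℝ)^(2-φ) = at_ * ((1/4) * (n:ℝ)^(2-φ)) := by ring
          _ ≤ at_ * ((n-1:ℕ):ℝ)^(2-φ) := mul_le_mul_of_nonneg_left hp1 hat.le
          _ ≤ Sp (1-φ) (n-1) := h.1
        · calc Sp (1-φ) (n-1) ≤ bt * ((n-1:ℕ):ℝ)^(2-φ) := h.2
          _ ≤ bt * (n:ℝ)^(2-φ) :=
            mul_le_mul_of_nonneg_left hp2 (hat.trans_le hatb).le)
    refine theta_congr 1 (fun n hn => ?_) hth
    have hnp : (0:ℝ) < (n:ℝ) := by exact_mod_cast hn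
    rw [show (3:ℝ)-φ = (2-φ)+1 by ring, Real.rpow_add_one hnp.ne', div_eq_mul_inv]
    ring
  · -- 0 ≤ γ < 1 : Θ(n^{3-φ})
    intro hγ1
    obtain ⟨az, bz, haz, hazb, hSz⟩ := Sp_theta (s := -γ) (by linarith)
    obtain ⟨at_, bt, hat, hatb, hSp⟩ := Sp_theta (s := 2-φ-γ) (by linarith)
    have hth := G_theta (γ := γ) hβ hφ₁ hφ₂ (hz := fun n => (n:ℝ) ^ (1-γ))
      (ht := fun n => (n:ℝ) ^ (3-φ-γ))
      (za := az/4) (zb := bz) (ta := at_/4) (tb := bt) (by positivity) (by positivity)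
      (N₀ := 2) le_rfl
      (fun n hn => Real.rpow_pos_of_pos (by exact_mod_cast (by omega : 0 < n)) _)
      (fun n hn => Real.rpow_pos_of_pos (by exact_mod_cast (by omega : 0 < n)) _)
      (fun n hn => by
        rw [Z_eq]
        have h := hSz (n-1) (by omega)
        rw [show -γ+1 = 1-γ by ring] at h
        obtain ⟨hp1, hp2⟩ := rpow_pred_bounds (t := 1-γ) (by linarith) (by linarith) hn
        constructor
        · calc az/4 * (n:ℝ)^(1-γ) = az * ((1/4) * (n:ℝ)^(1-γ)) := by ring
          _ ≤ az * ((n-1:ℕ):ℝ)^(1-γ) := mul_le_mul_of_nonneg_left hp1 haz.le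
          _ ≤ Sp (-γ) (n-1) := h.1
        · calc Sp (-γ) (n-1) ≤ bz * ((n-1:ℕ):ℝ)^(1-γ) := h.2
          _ ≤ bz * (n:ℝ)^(1-γ) :=
            mul_le_mul_of_nonneg_left hp2 (haz.trans_le hazb).le)
      (fun n hn => by
        have h := hSp (n-1) (by omega)
        rw [show 2-φ-γ+1 = 3-φ-γ by ring] at h
        obtain ⟨hp1, hp2⟩ := rpow_pred_bounds (t := 3-φ-γ) (by linarith) (by linarith) hn
        constructor
        · calc at_/4 * (n:ℝ)^(3-φ-γ) = at_ * ((1/4) * (n:ℝ)^(3-φ-γ)) := by ring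
          _ ≤ at_ * ((n-1:ℕ):ℝ)^(3-φ-γ) := mul_le_mul_of_nonneg_left hp1 hat.le
          _ ≤ Sp (2-φ-γ) (n-1) := h.1
        · calc Sp (2-φ-γ) (n-1) ≤ bt * ((n-1:ℕ):ℝ)^(3-φ-γ) := h.2
          _ ≤ bt * (n:ℝ)^(3-φ-γ) :=
            mul_le_mul_of_nonneg_left hp2 (hat.trans_le hatb).le)
    refine theta_congr 1 (fun n hn => ?_) hth
    have hnp : (0:ℝ) < (n:ℝ) := by exact_mod_cast hn
    calc (n:ℝ) * (n:ℝ)^(3-φ-γ) * ((n:ℝ)^(1-γ))⁻¹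
        = (n:ℝ)^(3-φ-γ) * (n:ℝ)^(-(1-γ)) * (n:ℝ) := by
          rw [← Real.rpow_neg hnp.le]; ring
      _ = (n:ℝ)^(3-φ-γ + -(1-γ)) * (n:ℝ) := by rw [Real.rpow_add hnp]
      _ = (n:ℝ)^(2-φ) * (n:ℝ) := by rw [show 3-φ-γ + -(1-γ) = 2-φ by ring]
      _ = (n:ℝ)^(2-φ+1) := (Real.rpow_add_one hnp.ne' _).symm
      _ = (n:ℝ)^(3-φ) := by rw [show 2-φ+1 = 3-φ by ring]
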